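/- Let f : ℝ → ℝ be bounded, let a ∈ ℝ, and assume the one-sided limits f(a⁻) and f(a⁺) exist with f(a⁻) ≤ f(a⁺). Let u(x) = ∫_a^x f(y) dy. Then the subdifferential of u at a is exactly the interval [f(a⁻), f(a⁺)]: D⁻u(a) = [f(a⁻), f(a⁺)]. -/

import Mathlib

open Set Filter Topology intervalIntegral

/-- `c` belongs to the subdifferential `D⁻u(x₀)`. -/
def subdiff (u : ℝ → ℝ) (x₀ : ℝ) : Set ℝ :=
  {c : ℝ | ∀ ε > (0:ℝ), ∃ δ > (0:ℝ), ∀ x : ℝ, |x - x₀| < δ →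
    u x₀ + c * (x - x₀) - ε * |x - x₀| ≤ u x}

open MeasureTheory in
lemma aux_upper (f : ℝ → ℝ) (a b L : ℝ) (hab : a ≤ b)
    (hint : IntervalIntegrable f volume a b)
    (h : ∀ y ∈ Ioo a b, f y ≤ L) :
    (∫ y in a..b, f y) ≤ L * (b - a) := by
  rw [intervalIntegral.integral_of_le hab, MeasureTheory.integral_Ioc_eq_integral_Ioo]
  have h2 : (∫ y in Ioo a b, f y) ≤ ∫ _y in Ioo a b, L :=
    setIntegral_mono_on (hint.1.mono_set Ioo_subset_Ioc_self)
      (integrableOn_const measure_Ioo_lt_top.ne) measurableSet_Ioo h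
  have h3 : (∫ _y in Ioo a b, L) = (b - a) * L := by
    simp [Real.volume_Ioo, ENNReal.toReal_ofReal (sub_nonneg.2 hab), hab]
  rw [h3] at h2
  linarith [h2, mul_comm L (b - a)]

open MeasureTheory in
lemma aux_lower (f : ℝ → ℝ) (a b L : ℝ) (hab : a ≤ b)
    (hint : IntervalIntegrable f volume a b)
    (h : ∀ y ∈ Ioo a b, L ≤ f y) :
    L * (b - a) ≤ ∫ y in a..b, f y := by
  rw [intervalIntegral.integral_of_le hab, MeasureTheory.integral_Ioc_eq_integral_Ioo]
  have h2 : (∫ _y in Ioo a b, L) ≤ ∫ y in Ioo a b, f y :=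
    setIntegral_mono_on (integrableOn_const measure_Ioo_lt_top.ne)
      (hint.1.mono_set Ioo_subset_Ioc_self) measurableSet_Ioo h
  have h3 : (∫ _y in Ioo a b, L) = (b - a) * L := by
    simp [Real.volume_Ioo, ENNReal.toReal_ofReal (sub_nonneg.2 hab), hab]
  rw [h3] at h2
  linarith [h2, mul_comm L (b - a)]

theorem stmt4 (f : ℝ → ℝ) (M : ℝ) (hbd : ∀ y, |f y| ≤ M) (hmeas : Measurable f)
    (a fm fp : ℝ)
    (hfm : Tendsto f (𝓝[<] a) (𝓝 fm)) (hfp : Tendsto f (𝓝[>] a) (𝓝 fp))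
    (hle : fm ≤ fp) :
    subdiff (fun x => ∫ y in a..x, f y) a = Icc fm fp := by
  have hint : ∀ p q : ℝ, IntervalIntegrable f MeasureTheory.volume p q := by
    intro p q
    constructor <;>
      exact MeasureTheory.Measure.integrableOn_of_bounded
        (ne_of_lt measure_Ioc_lt_top) hmeas.aestronglyMeasurable
        (Filter.Eventually.of_forall fun y => by simpa using hbd y)
  ext c
  simp only [subdiff, mem_setOf_eq, mem_Icc]
  constructor
  · intro hc
    constructor
    · -- fm ≤ c
      by_contra hlt
      push_neg at hlt
      set ε := (fm - c) / 3 with hεdef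
      have hεpos : 0 < ε := by simp only [hεdef]; linarith
      obtain ⟨δ, hδ, hx⟩ := hc ε hεpos
      have h1 : ∀ᶠ y in 𝓝[<] a, fm - ε ≤ f y :=
        hfm.eventually (eventually_ge_nhds (by linarith))
      rw [eventually_nhdsWithin_iff, Metric.eventually_nhds_iff] at h1
      obtain ⟨δ₂, hδ₂, H⟩ := h1
      have hmin : 0 < min δ δ₂ := lt_min hδ hδ₂
      set x := a - min δ δ₂ / 2 with hxdef
      have hxa : x < a := by simp only [hxdef]; linarith
      have hd : |x - a| < δ := by
        rw [abs_sub_lt_iff]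
        constructor <;> simp only [hxdef] <;>
          [linarith [min_le_left δ δ₂]; linarith [min_le_left δ δ₂]]
      have hbnd : ∀ y ∈ Ioo x a, fm - ε ≤ f y := by
        intro y hy
        refine H ?_ hy.2
        rw [Real.dist_eq, abs_sub_lt_iff]
        constructor
        · linarith [hy.2]
        · have : x < y := hy.1
          simp only [hxdef] at this
          linarith [min_le_right δ δ₂]
      have hub : (∫ y in a..x, f y) ≤ (fm - ε) * (x - a) := by
        have h5 := aux_lower f x a (fm - ε) hxa.le (hint x a) hbnd
        rw [intervalIntegral.integral_symm]
        linarith [h5]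
      have h6 := hx x hd
      simp only [intervalIntegral.integral_same, zero_add] at h6
      have habs : |x - a| = a - x := by rw [abs_of_neg (by linarith)]; ring
      rw [habs] at h6
      nlinarith [mul_pos (show (0:ℝ) < fm - c - 2 * ε by simp only [hεdef]; linarith)
        (show (0:ℝ) < a - x by linarith)]
    · -- c ≤ fp
      by_contra hlt
      push_neg at hlt
      set ε := (c - fp) / 3 with hεdef
      have hεpos : 0 < ε := by simp only [hεdef]; linarith
      obtain ⟨δ, hδ, hx⟩ := hc ε hεpos
      have h1 : ∀ᶠ y in 𝓝[>] a, f y ≤ fp + ε :=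
        hfp.eventually (eventually_le_nhds (by linarith))
      rw [eventually_nhdsWithin_iff, Metric.eventually_nhds_iff] at h1
      obtain ⟨δ₂, hδ₂, H⟩ := h1
      have hmin : 0 < min δ δ₂ := lt_min hδ hδ₂
      set x := a + min δ δ₂ / 2 with hxdef
      have hxa : a < x := by simp only [hxdef]; linarith
      have hd : |x - a| < δ := by
        rw [abs_sub_lt_iff]
        constructor <;> simp only [hxdef] <;>
          [linarith [min_le_left δ δ₂]; linarith [min_le_left δ δ₂]]
      have hbnd : ∀ y ∈ Ioo a x, f y ≤ fp + ε := by
        intro y hy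
        refine H ?_ hy.1
        rw [Real.dist_eq, abs_sub_lt_iff]
        constructor
        · have : y < x := hy.2
          simp only [hxdef] at this
          linarith [min_le_right δ δ₂]
        · linarith [hy.1]
      have hub : (∫ y in a..x, f y) ≤ (fp + ε) * (x - a) :=
        aux_upper f a x (fp + ε) hxa.le (hint a x) hbnd
      have h6 := hx x hd
      simp only [intervalIntegral.integral_same, zero_add] at h6
      have habs : |x - a| = x - a := abs_of_pos (by linarith)
      rw [habs] at h6
      nlinarith [mul_pos (show (0:ℝ) < c - fp - 2 * ε by simp only [hεdef]; linarith)
        (show (0:ℝ) < x - a by linarith)]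
  · rintro ⟨h1, h2⟩ ε hε
    have hm : ∀ᶠ y in 𝓝[<] a, f y ≤ fm + ε :=
      hfm.eventually (eventually_le_nhds (by linarith))
    have hp : ∀ᶠ y in 𝓝[>] a, fp - ε ≤ f y :=
      hfp.eventually (eventually_ge_nhds (by linarith))
    rw [eventually_nhdsWithin_iff, Metric.eventually_nhds_iff] at hm hp
    obtain ⟨δ₁, hδ₁, H1⟩ := hm
    obtain ⟨δ₂, hδ₂, H2⟩ := hp
    refine ⟨min δ₁ δ₂, lt_min hδ₁ hδ₂, ?_⟩
    intro x hx
    simp only [intervalIntegral.integral_same, zero_add]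
    rcases lt_trichotomy x a with h | h | h
    · -- x < a
      have hbnd : ∀ y ∈ Ioo x a, f y ≤ fm + ε := by
        intro y hy
        refine H1 ?_ hy.2
        rw [Real.dist_eq, abs_sub_lt_iff]
        have h3 : |x - a| < δ₁ := lt_of_lt_of_le hx (min_le_left _ _)
        rw [abs_sub_lt_iff] at h3
        constructor
        · linarith [hy.2]
        · linarith [hy.1, h3.2]
      have hub := aux_upper f x a (fm + ε) h.le (hint x a) hbnd
      have heq : (∫ y in a..x, f y) = -∫ y in x..a, f y :=
        intervalIntegral.integral_symm x a
      have habs : |x - a| = a - x := by rw [abs_of_neg (by linarith)]; ring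
      rw [habs, heq]
      nlinarith [mul_nonneg (sub_nonneg.2 h1) (show (0:ℝ) ≤ a - x by linarith)]
    · subst h; simp
    · -- a < x
      have hbnd : ∀ y ∈ Ioo a x, fp - ε ≤ f y := by
        intro y hy
        refine H2 ?_ hy.1
        rw [Real.dist_eq, abs_sub_lt_iff]
        have h3 : |x - a| < δ₂ := lt_of_lt_of_le hx (min_le_right _ _)
        rw [abs_sub_lt_iff] at h3
        constructor
        · linarith [hy.2, h3.1]
        · linarith [hy.1]
      have hlb := aux_lower f a x (fp - ε) h.le (hint a x) hbnd
      have habs : |x - a| = x - a := abs_of_pos (by linarith)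
      rw [habs]
      nlinarith [mul_nonneg (sub_nonneg.2 h2) (show (0:ℝ) ≤ x - a by linarith)]
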